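/- For all real q with 0 < q ≤ 0.156, the quantity (1 + (4q²)^(1/3))³ / (q+1)² is strictly less than 7/3. -/
import Mathlib


open Real

/-- For all real `q` with `0 < q ≤ 0.156`, the bound
`(1 + (4q²)^(1/3))³ / (q+1)² < 7/3` holds. -/
theorem thin_triangle_ratio_bound (q : ℝ) (hq0 : 0 < q) (hq1 : q ≤ 0.156) :
    (1 + (4 * q ^ 2) ^ ((1 : ℝ) / 3)) ^ 3 / (q + 1) ^ 2 < 7 / 3 := by
  have hq2 : (0:ℝ) < 2 * q := by linarith
  set v := (2 * q) ^ ((1:ℝ)/3) with hv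
  have hv0 : 0 < v := Real.rpow_pos_of_pos hq2 _
  have hv3 : v ^ 3 = 2 * q := by
    rw [hv, ← Real.rpow_natCast ((2*q) ^ ((1:ℝ)/3)) 3, ← Real.rpow_mul hq2.le]
    norm_num
  have hkey : (4 * q ^ 2) ^ ((1:ℝ)/3) = v ^ 2 := by
    have h4 : (4 * q ^ 2) = (2 * q) ^ 2 := by ring
    rw [h4, ← Real.rpow_natCast (2*q) 2, ← Real.rpow_mul hq2.le, hv,
      ← Real.rpow_natCast ((2*q) ^ ((1:ℝ)/3)) 2, ← Real.rpow_mul hq2.le]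
    norm_num
  rw [hkey]
  have hvle : v ≤ 0.679 := by
    nlinarith [hv3, hv0, sq_nonneg (v - 0.679), sq_nonneg (v + 0.679)]
  rw [div_lt_iff₀ (by positivity)]
  nlinarith [hv3, hvle, hv0, sq_nonneg v, sq_nonneg (v - 0.679),
    mul_nonneg (mul_nonneg (sub_nonneg.2 hvle) hv0.le) hv0.le,
    mul_nonneg (mul_nonneg (mul_nonneg (sub_nonneg.2 hvle) hv0.le) hv0.le) hv0.le,
    mul_nonneg (mul_nonneg (sub_nonneg.2 hvle) (sub_nonneg.2 hvle)) (sq_nonneg v),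
    mul_nonneg (mul_nonneg (mul_nonneg (sub_nonneg.2 hvle) (sub_nonneg.2 hvle)) (sq_nonneg v)) (sq_nonneg v),
    mul_nonneg (sub_nonneg.2 hvle) (sq_nonneg (v - 0.679))]
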